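/- Let P, Q, R be set partitions of X_k^l, X_l^m, X_m^p respectively (partitions of types (l;k), (m;l), (p;m)). Then (R ⋆ Q) ⋆ P = R ⋆ (Q ⋆ P), and α(R, Q ⋆ P) + α(Q, P) = α(R ⋆ Q, P) + α(R, Q). -/

import Mathlib

/-!
Statement 5: associativity of the composition of partition diagrams,
`(R ⋆ Q) ⋆ P = R ⋆ (Q ⋆ P)`, together with the count of middle components:
`α(R, Q ⋆ P) + α(Q, P) = α(R ⋆ Q, P) + α(R, Q)`.
-/

namespace GPC

variable {G : Type*} [Group G]

/-- Equivalence of `G`-partitions with the same underlying partition `P`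
(a set partition is encoded as a `Setoid`, whose classes are the parts):
`(P, g) ∼ (P, g')` iff for every part there is `t ∈ G` with `g' = t * g` on that part. -/
def LabelEquiv {X : Type*} (P : Setoid X) (g g' : X → G) : Prop :=
  ∀ a : X, ∃ t : G, ∀ b : X, P a b → g' b = t * g b

section Stack

variable {k l m : ℕ}

/-- Embedding of the vertex set of `P` (bottom row `Fin k`, top row `Fin l`)
into the three-row vertex set of the stacked diagram, where the top row of `P`
becomes the middle row. -/
def embBot : Fin k ⊕ Fin l → Fin k ⊕ (Fin l ⊕ Fin m) := Sum.map id Sum.inl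

/-- Embedding of the vertex set of `Q` (bottom row `Fin l`, top row `Fin m`)
into the three-row vertex set of the stacked diagram, where the bottom row of `Q`
becomes the middle row. -/
def embTop : Fin l ⊕ Fin m → Fin k ⊕ (Fin l ⊕ Fin m) := Sum.inr

/-- The partition of the three-row vertex set of `stack(Q, P)` into connected
components: the equivalence relation generated by the parts of `P` and of `Q`. -/
def stackSetoid (P : Setoid (Fin k ⊕ Fin l)) (Q : Setoid (Fin l ⊕ Fin m)) :
    Setoid (Fin k ⊕ (Fin l ⊕ Fin m)) :=
  Relation.EqvGen.setoid (fun x y =>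
    (∃ a b, P a b ∧ x = embBot a ∧ y = embBot b)
      ∨ (∃ a b, Q a b ∧ x = embTop a ∧ y = embTop b))

/-- The composite partition `Q ⋆ P`: bottom and top vertices are in the same
part iff they are connected in `stack(Q, P)`. -/
def starPart (P : Setoid (Fin k ⊕ Fin l)) (Q : Setoid (Fin l ⊕ Fin m)) :
    Setoid (Fin k ⊕ Fin m) :=
  Setoid.comap (Sum.map id Sum.inr) (stackSetoid P Q)

/-- `α(Q, P)`: the number of connected components of `stack(Q, P)` consisting
only of middle vertices. -/
noncomputable def alphaNum (P : Setoid (Fin k ⊕ Fin l)) (Q : Setoid (Fin l ⊕ Fin m)) : ℕ :=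
  Nat.card {c : Quotient (stackSetoid P Q) //
    ∀ x, Quotient.mk (stackSetoid P Q) x = c → ∃ i : Fin l, x = Sum.inr (Sum.inl i)}

/-- The label `g_{i'} h_i⁻¹` of the `i`-th middle vertex of the stacked diagram
`stack((Q, h), (P, g))`. -/
def midLabel (g : Fin k ⊕ Fin l → G) (h : Fin l ⊕ Fin m → G) (i : Fin l) : G :=
  g (Sum.inr i) * (h (Sum.inl i))⁻¹

/-- Compatibility of the pair `((Q, h), (P, g))`: any two middle vertices lying
in the same part of `Q` have equal labels. -/
def Compatible (P : Setoid (Fin k ⊕ Fin l)) (g : Fin k ⊕ Fin l → G)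
    (Q : Setoid (Fin l ⊕ Fin m)) (h : Fin l ⊕ Fin m → G) : Prop :=
  ∀ i j : Fin l, Q (Sum.inl i) (Sum.inl j) → midLabel g h i = midLabel g h j

open scoped Classical in
/-- The labelling `h ⋆_{Q,P} g` of `Q ⋆ P`: bottom vertices keep the labels `g`,
and the top vertex `i'` gets `u * h_{i'}` where `u` is the (for compatible pairs,
common) label of the middle vertices in the same part of `Q` as `i'`
(`u = 1` if there are none). -/
noncomputable def starLabel (g : Fin k ⊕ Fin l → G)
    (Q : Setoid (Fin l ⊕ Fin m)) (h : Fin l ⊕ Fin m → G) :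
    Fin k ⊕ Fin m → G :=
  Sum.elim (fun a => g (Sum.inl a))
    (fun c => (if hc : ∃ j : Fin l, Q (Sum.inl j) (Sum.inr c)
                then midLabel g h hc.choose else 1) * h (Sum.inr c))

end Stack


section AuxLemmas
open Relation

variable {W X : Type*}

/-- Push a relation on `X` forward along `j : X → W`. -/
def liftR (j : X → W) (r : X → X → Prop) : W → W → Prop :=
  fun x y => ∃ a b, r a b ∧ x = j a ∧ y = j b

theorem eqvGen_liftR_of {j : X → W} {r : X → X → Prop} {a b : X} (h : EqvGen r a b) :
    EqvGen (liftR j r) (j a) (j b) := by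
  induction h with
  | rel a b h => exact EqvGen.rel _ _ ⟨a, b, h, rfl, rfl⟩
  | refl a => exact EqvGen.refl _
  | symm a b _ ih => exact ih.symm _ _
  | trans a b c _ _ ih1 ih2 => exact ih1.trans _ _ _ ih2

theorem eqvGen_liftR_dec {j : X → W} (hj : Function.Injective j) {r : X → X → Prop} {x y : W}
    (h : EqvGen (liftR j r) x y) :
    x = y ∨ ∃ a b, x = j a ∧ y = j b ∧ EqvGen r a b := by
  induction h with
  | rel x y h => exact Or.inr ⟨h.choose, h.choose_spec.choose,
      h.choose_spec.choose_spec.2.1, h.choose_spec.choose_spec.2.2,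
      EqvGen.rel _ _ h.choose_spec.choose_spec.1⟩
  | refl x => exact Or.inl rfl
  | symm x y _ ih =>
      rcases ih with rfl | ⟨a, b, rfl, rfl, h⟩
      · exact Or.inl rfl
      · exact Or.inr ⟨b, a, rfl, rfl, h.symm _ _⟩
  | trans x y z _ _ ih1 ih2 =>
      rcases ih1 with rfl | ⟨a, b, rfl, rfl, h1⟩
      · exact ih2
      · rcases ih2 with heq | ⟨b', c, heq, rfl, h2⟩
        · exact Or.inr ⟨a, b, rfl, heq.symm, h1⟩
        · exact Or.inr ⟨a, c, rfl, rfl, h1.trans _ _ _ (hj heq ▸ h2)⟩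

theorem eqvGen_le {r e : W → W → Prop} (he : Equivalence e) (h : ∀ x y, r x y → e x y)
    {x y : W} (hxy : EqvGen r x y) : e x y :=
  (he.eqvGen_iff).mp (hxy.mono h)

theorem eqvGen_congr {r s : W → W → Prop} (h : ∀ a b, r a b ↔ s a b) {x y : W} :
    EqvGen r x y ↔ EqvGen s x y :=
  ⟨fun hh => hh.mono fun a b => (h a b).mp, fun hh => hh.mono fun a b => (h a b).mpr⟩

theorem eqvGen_iff_of_le {r s : W → W → Prop} (h1 : ∀ a b, r a b → EqvGen s a b)
    (h2 : ∀ a b, s a b → EqvGen r a b) {x y : W} :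
    EqvGen r x y ↔ EqvGen s x y :=
  ⟨fun h => eqvGen_le (EqvGen.is_equivalence _) h1 h, fun h => eqvGen_le (EqvGen.is_equivalence _) h2 h⟩

theorem eqvGen_liftR_iff {j : X → W} (hj : Function.Injective j) {r : X → X → Prop} {a b : X} :
    EqvGen r a b ↔ EqvGen (liftR j r) (j a) (j b) := by
  refine ⟨eqvGen_liftR_of, fun h => ?_⟩
  rcases eqvGen_liftR_dec hj h with heq | ⟨a', b', ha, hb, h⟩
  · exact hj heq ▸ EqvGen.refl _
  · rw [hj ha, hj hb]; exact h

/-- Purity: components of `u` entirely inside `G` are untouched by `v`-edges. -/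
theorem pure_lemma {u v : W → W → Prop} {G : W → Prop}
    (hv : ∀ x y, v x y → ¬ G x ∧ ¬ G y) {x y : W}
    (h : EqvGen (fun a b => u a b ∨ v a b) x y)
    (hx : G x ∧ ∀ z, EqvGen u x z → G z) :
    (G y ∧ ∀ z, EqvGen u y z → G z) ∧ EqvGen u x y := by
  set Pure : W → Prop := fun x => G x ∧ ∀ z, EqvGen u x z → G z with hPure
  suffices H : (Pure x → Pure y ∧ EqvGen u x y) ∧ (Pure y → Pure x ∧ EqvGen u x y) by
    rcases H.1 hx with ⟨h1, h2⟩; exact ⟨h1, h2⟩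
  clear hx
  induction h with
  | rel x y h =>
      rcases h with h | h
      · constructor
        · rintro ⟨hG, hall⟩
          refine ⟨⟨hall _ (EqvGen.rel _ _ h), fun z hz => hall z ((EqvGen.rel _ _ h).trans _ _ _ hz)⟩,
            EqvGen.rel _ _ h⟩
        · rintro ⟨hG, hall⟩
          have huxy : EqvGen u x y := EqvGen.rel _ _ h
          refine ⟨⟨hall _ (huxy.symm _ _), fun z hz => hall z ((huxy.symm _ _).trans _ _ _ hz)⟩, huxy⟩
      · constructor
        · rintro ⟨hG, _⟩; exact absurd hG (hv _ _ h).1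
        · rintro ⟨hG, _⟩; exact absurd hG (hv _ _ h).2
  | refl x => exact ⟨fun h => ⟨h, EqvGen.refl _⟩, fun h => ⟨h, EqvGen.refl _⟩⟩
  | symm x y _ ih =>
      exact ⟨fun h => ⟨(ih.2 h).1, ((ih.2 h).2).symm _ _⟩,
        fun h => ⟨(ih.1 h).1, ((ih.1 h).2).symm _ _⟩⟩
  | trans x y z _ _ ih1 ih2 =>
      constructor
      · intro h
        obtain ⟨hy, h1⟩ := ih1.1 h
        obtain ⟨hz, h2⟩ := ih2.1 hy
        exact ⟨hz, h1.trans _ _ _ h2⟩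
      · intro h
        obtain ⟨hy, h2⟩ := ih2.2 h
        obtain ⟨hx, h1⟩ := ih1.2 hy
        exact ⟨hx, h1.trans _ _ _ h2⟩

/-- Contraction lemma: connectivity between "outer" points for the union of `u`
with an outer-only relation `v` is generated by `u`-connectivity between outer
points together with `v`. -/
theorem contract_lemma {u v : W → W → Prop} {O : W → Prop}
    (hv : ∀ x y, v x y → O x ∧ O y) {x y : W} (hx : O x) (hy : O y) :
    EqvGen (fun a b => u a b ∨ v a b) x y ↔
      EqvGen (fun a b => O a ∧ O b ∧ (EqvGen u a b ∨ v a b)) x y := by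
  set w : W → W → Prop := fun a b => O a ∧ O b ∧ (EqvGen u a b ∨ v a b) with hw
  constructor
  · intro h
    set Link : W → W → Prop := fun x a => O a ∧ EqvGen u x a with hLink
    suffices H : ((∃ a, Link x a) ↔ (∃ a, Link y a)) ∧
        ∀ a b, Link x a → Link y b → EqvGen w a b by
      exact H.2 x y ⟨hx, EqvGen.refl _⟩ ⟨hy, EqvGen.refl _⟩
    clear hx hy
    induction h with
    | rel x y h =>
        rcases h with h | h
        · constructor
          · constructor
            · rintro ⟨a, ha, hua⟩
              exact ⟨a, ha, ((EqvGen.rel _ _ h).symm _ _).trans _ _ _ hua⟩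
            · rintro ⟨a, ha, hua⟩
              exact ⟨a, ha, (EqvGen.rel _ _ h).trans _ _ _ hua⟩
          · rintro a b ⟨ha, hua⟩ ⟨hb, hub⟩
            exact EqvGen.rel _ _ ⟨ha, hb, Or.inl ((hua.symm _ _).trans _ _ _
              ((EqvGen.rel _ _ h).trans _ _ _ hub))⟩
        · obtain ⟨hOx, hOy⟩ := hv _ _ h
          constructor
          · exact ⟨fun _ => ⟨y, hOy, EqvGen.refl _⟩, fun _ => ⟨x, hOx, EqvGen.refl _⟩⟩
          · rintro a b ⟨ha, hua⟩ ⟨hb, hub⟩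
            refine (EqvGen.rel _ _ ⟨ha, hOx, Or.inl (hua.symm _ _)⟩).trans _ _ _ ?_
            refine (EqvGen.rel _ _ ⟨hOx, hOy, Or.inr h⟩).trans _ _ _ ?_
            exact EqvGen.rel _ _ ⟨hOy, hb, Or.inl hub⟩
    | refl x =>
        refine ⟨Iff.rfl, ?_⟩
        rintro a b ⟨ha, hua⟩ ⟨hb, hub⟩
        exact EqvGen.rel _ _ ⟨ha, hb, Or.inl ((hua.symm _ _).trans _ _ _ hub)⟩
    | symm x y _ ih =>
        exact ⟨ih.1.symm, fun a b hya hxb => (ih.2 b a hxb hya).symm _ _⟩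
    | trans x y z _ _ ih1 ih2 =>
        refine ⟨ih1.1.trans ih2.1, ?_⟩
        rintro a b hxa hzb
        by_cases hLy : ∃ c, Link y c
        · obtain ⟨c, hc⟩ := hLy
          exact (ih1.2 a c hxa hc).trans _ _ _ (ih2.2 c b hc hzb)
        · exact absurd (ih1.1.mp ⟨a, hxa⟩) hLy
  · intro h
    refine eqvGen_le (Relation.EqvGen.is_equivalence _) ?_ h
    rintro a b ⟨ha, hb, huv | hvab⟩
    · exact huv.mono (fun a b h => Or.inl h)
    · exact EqvGen.rel _ _ (Or.inr hvab)

end AuxLemmas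


section BigStack
open Relation

variable {k l m p : ℕ}

/-- The four-row vertex set. -/
abbrev Wt (k l m p : ℕ) := Fin k ⊕ (Fin l ⊕ (Fin m ⊕ Fin p))

def vA (a : Fin k) : Wt k l m p := Sum.inl a
def vB (i : Fin l) : Wt k l m p := Sum.inr (Sum.inl i)
def vC (c : Fin m) : Wt k l m p := Sum.inr (Sum.inr (Sum.inl c))
def vD (d : Fin p) : Wt k l m p := Sum.inr (Sum.inr (Sum.inr d))

def jP : Fin k ⊕ Fin l → Wt k l m p := Sum.map id Sum.inl
def jQ : Fin l ⊕ Fin m → Wt k l m p := fun x => Sum.inr (Sum.map id Sum.inl x)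
def jR : Fin m ⊕ Fin p → Wt k l m p := fun x => Sum.inr (Sum.inr x)
def jA : Fin k ⊕ (Fin l ⊕ Fin m) → Wt k l m p := Sum.map id (Sum.map id Sum.inl)
def jB : Fin l ⊕ (Fin m ⊕ Fin p) → Wt k l m p := Sum.inr
def jC : Fin k ⊕ (Fin m ⊕ Fin p) → Wt k l m p := Sum.map id Sum.inr
def jD : Fin k ⊕ (Fin l ⊕ Fin p) → Wt k l m p := Sum.map id (Sum.map id Sum.inr)

theorem jA_inj : Function.Injective (jA (k := k) (l := l) (m := m) (p := p)) :=
  Function.injective_id.sumMap (Function.injective_id.sumMap Sum.inl_injective)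
theorem jB_inj : Function.Injective (jB (k := k) (l := l) (m := m) (p := p)) :=
  Sum.inr_injective
theorem jC_inj : Function.Injective (jC (k := k) (l := l) (m := m) (p := p)) :=
  Function.injective_id.sumMap Sum.inr_injective
theorem jD_inj : Function.Injective (jD (k := k) (l := l) (m := m) (p := p)) :=
  Function.injective_id.sumMap (Function.injective_id.sumMap Sum.inr_injective)

variable (P : Setoid (Fin k ⊕ Fin l)) (Q : Setoid (Fin l ⊕ Fin m)) (R : Setoid (Fin m ⊕ Fin p))

/-- Generator edges of the four-row stacked diagram. -/
def bigGen : Wt k l m p → Wt k l m p → Prop :=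
  fun x y => liftR jP (⇑P) x y ∨ liftR jQ (⇑Q) x y ∨ liftR jR (⇑R) x y

/-- The partition of the four-row diagram into connected components. -/
def TS : Setoid (Wt k l m p) := Relation.EqvGen.setoid (bigGen P Q R)

/-- Generator edges of a two-diagram stack, in `liftR` form. -/
def sgen {a b c : ℕ} (X : Setoid (Fin a ⊕ Fin b)) (Y : Setoid (Fin b ⊕ Fin c)) :
    (Fin a ⊕ (Fin b ⊕ Fin c)) → (Fin a ⊕ (Fin b ⊕ Fin c)) → Prop :=
  fun x y => liftR embBot (⇑X) x y ∨ liftR embTop (⇑Y) x y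

theorem stack_rel {a b c : ℕ} (X : Setoid (Fin a ⊕ Fin b)) (Y : Setoid (Fin b ⊕ Fin c))
    {x y : Fin a ⊕ (Fin b ⊕ Fin c)} :
    stackSetoid X Y x y ↔ EqvGen (sgen X Y) x y := Iff.rfl

theorem liftR_or_iff {W X : Type*} {j : X → W} {r s : X → X → Prop} {x y : W} :
    liftR j (fun a b => r a b ∨ s a b) x y ↔ (liftR j r x y ∨ liftR j s x y) := by
  constructor
  · rintro ⟨a, b, h | h, rfl, rfl⟩
    · exact Or.inl ⟨a, b, h, rfl, rfl⟩
    · exact Or.inr ⟨a, b, h, rfl, rfl⟩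
  · rintro (⟨a, b, h, rfl, rfl⟩ | ⟨a, b, h, rfl, rfl⟩)
    · exact ⟨a, b, Or.inl h, rfl, rfl⟩
    · exact ⟨a, b, Or.inr h, rfl, rfl⟩

theorem liftR_comp_iff {W X Y : Type*} {j : Y → W} {i : X → Y} {r : X → X → Prop} {x y : W} :
    liftR j (liftR i r) x y ↔ liftR (fun a => j (i a)) r x y := by
  constructor
  · rintro ⟨a, b, ⟨a', b', h, rfl, rfl⟩, rfl, rfl⟩
    exact ⟨a', b', h, rfl, rfl⟩
  · rintro ⟨a, b, h, rfl, rfl⟩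
    exact ⟨i a, i b, ⟨a, b, h, rfl, rfl⟩, rfl, rfl⟩

theorem liftR_ext_iff {W X : Type*} {j j' : X → W} (h : ∀ a, j a = j' a)
    {r : X → X → Prop} {x y : W} : liftR j r x y ↔ liftR j' r x y := by
  constructor
  · rintro ⟨a, b, hr, rfl, rfl⟩; exact ⟨a, b, hr, (h a).symm ▸ rfl, (h b).symm ▸ rfl⟩
  · rintro ⟨a, b, hr, rfl, rfl⟩; exact ⟨a, b, hr, h a ▸ rfl, h b ▸ rfl⟩

theorem jA_embBot (a : Fin k ⊕ Fin l) :
    jA (m := m) (p := p) (embBot a) = jP a := by rcases a with a | i <;> rfl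
theorem jA_embTop (a : Fin l ⊕ Fin m) :
    jA (k := k) (p := p) (embTop a) = jQ a := rfl
theorem jB_embBot (a : Fin l ⊕ Fin m) :
    jB (k := k) (p := p) (embBot a) = jQ a := rfl
theorem jB_embTop (a : Fin m ⊕ Fin p) :
    jB (k := k) (l := l) (embTop a) = jR a := rfl

/-- The bottom-plus-middle edges, as push-forward of the generator of `stack(Q,P)`. -/
theorem uPQ_iff {x y : Wt k l m p} :
    (liftR jP (⇑P) x y ∨ liftR jQ (⇑Q) x y) ↔ liftR jA (sgen P Q) x y := by
  unfold sgen
  rw [liftR_or_iff, liftR_comp_iff, liftR_comp_iff,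
    liftR_ext_iff (jA_embBot), liftR_ext_iff (fun a => jA_embTop a)]

theorem uQR_iff {x y : Wt k l m p} :
    (liftR jQ (⇑Q) x y ∨ liftR jR (⇑R) x y) ↔ liftR jB (sgen Q R) x y := by
  unfold sgen
  rw [liftR_or_iff, liftR_comp_iff, liftR_comp_iff,
    liftR_ext_iff (jB_embBot), liftR_ext_iff (fun a => jB_embTop a)]

theorem CA_cases {a0 : Fin k ⊕ (Fin m ⊕ Fin p)} {aa : Fin k ⊕ (Fin l ⊕ Fin m)}
    (h : jC a0 = jA aa) :
    ∃ a1 : Fin k ⊕ Fin m, a0 = Sum.map id Sum.inl a1 ∧ aa = Sum.map id Sum.inr a1 := by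
  rcases a0 with a | (c | d) <;> rcases aa with a' | (i | c') <;>
    simp [jC, jA] at h
  · exact ⟨Sum.inl a, by simp [h]⟩
  · exact ⟨Sum.inr c, by simp [h]⟩

theorem CR_case {a0 : Fin k ⊕ (Fin m ⊕ Fin p)} {r1 : Fin m ⊕ Fin p}
    (h : jC (l := l) a0 = jR r1) : a0 = Sum.inr r1 := by
  rcases a0 with a | x <;> simp [jC, jR] at h ⊢
  exact h

theorem DB_cases {a0 : Fin k ⊕ (Fin l ⊕ Fin p)} {aa : Fin l ⊕ (Fin m ⊕ Fin p)}
    (h : jD a0 = jB aa) :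
    ∃ a1 : Fin l ⊕ Fin p, a0 = Sum.inr a1 ∧ aa = Sum.map id Sum.inr a1 := by
  rcases a0 with a | (i | d) <;> rcases aa with i' | (c | d') <;>
    simp [jD, jB] at h
  · exact ⟨Sum.inl i, by simp [h]⟩
  · exact ⟨Sum.inr d, by simp [h]⟩

theorem DP_case {a0 : Fin k ⊕ (Fin l ⊕ Fin p)} {a : Fin k ⊕ Fin l}
    (h : jD (m := m) a0 = jP a) : a0 = Sum.map id Sum.inl a := by
  rcases a0 with a' | (i | d) <;> rcases a with a'' | i' <;> simp [jD, jP] at h <;> simp [h]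

/-- The key contraction identity for `stack(R, Q ⋆ P)`. -/
theorem relC (x y : Fin k ⊕ (Fin m ⊕ Fin p)) :
    stackSetoid (starPart P Q) R x y ↔ TS P Q R (jC x) (jC y) := by
  have hOr : ∀ a b : Wt k l m p, bigGen P Q R a b ↔
      ((liftR jP (⇑P) a b ∨ liftR jQ (⇑Q) a b) ∨ liftR jR (⇑R) a b) := by
    intro a b; unfold bigGen; tauto
  have hv : ∀ a b : Wt k l m p, liftR jR (⇑R) a b →
      (∃ z, a = jC z) ∧ (∃ z, b = jC z) := by
    rintro a b ⟨r1, r2, h, rfl, rfl⟩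
    exact ⟨⟨Sum.inr r1, rfl⟩, ⟨Sum.inr r2, rfl⟩⟩
  have key := contract_lemma (u := fun a b => liftR jP (⇑P) a b ∨ liftR jQ (⇑Q) a b)
    (v := liftR jR (⇑R)) (O := fun w => ∃ z, w = jC z) hv
    (x := jC x) (y := jC y) ⟨x, rfl⟩ ⟨y, rfl⟩
  have h3 : ∀ a1 : Fin k ⊕ Fin m, jA (Sum.map id Sum.inr a1) = jC (l := l) (embBot a1 : Fin k ⊕ (Fin m ⊕ Fin p)) := by
    rintro (a | c) <;> rfl
  have main : EqvGen (liftR (jC (l := l)) (sgen (starPart P Q) R)) (jC x) (jC y) ↔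
      EqvGen (fun a b => (∃ z, a = jC z) ∧ (∃ z, b = jC z) ∧
        (EqvGen (fun a b => liftR jP (⇑P) a b ∨ liftR jQ (⇑Q) a b) a b ∨ liftR jR (⇑R) a b))
        (jC x) (jC y) := by
    apply eqvGen_iff_of_le
    · rintro a b ⟨a0, b0, hg, rfl, rfl⟩
      refine EqvGen.rel _ _ ⟨⟨a0, rfl⟩, ⟨b0, rfl⟩, ?_⟩
      rcases hg with ⟨a1, b1, hPQ, rfl, rfl⟩ | ⟨r1, r2, hR, rfl, rfl⟩
      · left
        have h1 : EqvGen (sgen P Q) (Sum.map id Sum.inr a1) (Sum.map id Sum.inr b1) := hPQ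
        have h2 := eqvGen_liftR_of (j := jA (p := p)) h1
        rw [h3 a1, h3 b1] at h2
        exact (eqvGen_congr (fun a b => (uPQ_iff P Q).symm)).mp h2
      · right
        exact ⟨r1, r2, hR, rfl, rfl⟩
    · rintro a b ⟨⟨a0, rfl⟩, ⟨b0, rfl⟩, h | h⟩
      · have h' := (eqvGen_congr (fun a b => uPQ_iff P Q)).mp h
        rcases eqvGen_liftR_dec jA_inj h' with heq | ⟨aa, bb, ha, hb, hE⟩
        · rw [jC_inj heq]; exact EqvGen.refl _
        · obtain ⟨a1, rfl, rfl⟩ := CA_cases ha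
          obtain ⟨b1, rfl, rfl⟩ := CA_cases hb
          have hS : starPart P Q a1 b1 := hE
          exact EqvGen.rel _ _ ⟨embBot a1, embBot b1, Or.inl ⟨a1, b1, hS, rfl, rfl⟩, rfl, rfl⟩
      · obtain ⟨r1, r2, hR, ha, hb⟩ := h
        obtain rfl := CR_case ha
        obtain rfl := CR_case hb
        exact EqvGen.rel _ _ ⟨embTop r1, embTop r2, Or.inr ⟨r1, r2, hR, rfl, rfl⟩, rfl, rfl⟩
  exact ((stack_rel _ _).trans
    ((eqvGen_liftR_iff jC_inj).trans
      (main.trans (key.symm.trans (eqvGen_congr hOr).symm))))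

/-- The key contraction identity for `stack(R ⋆ Q, P)`. -/
theorem relD (x y : Fin k ⊕ (Fin l ⊕ Fin p)) :
    stackSetoid P (starPart Q R) x y ↔ TS P Q R (jD x) (jD y) := by
  have hOr : ∀ a b : Wt k l m p, bigGen P Q R a b ↔
      ((liftR jQ (⇑Q) a b ∨ liftR jR (⇑R) a b) ∨ liftR jP (⇑P) a b) := by
    intro a b; unfold bigGen; tauto
  have hv : ∀ a b : Wt k l m p, liftR jP (⇑P) a b →
      (∃ z, a = jD z) ∧ (∃ z, b = jD z) := by
    rintro a b ⟨r1, r2, h, rfl, rfl⟩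
    exact ⟨⟨Sum.map id Sum.inl r1, by rcases r1 with a | i <;> rfl⟩,
      ⟨Sum.map id Sum.inl r2, by rcases r2 with a | i <;> rfl⟩⟩
  have key := contract_lemma (u := fun a b => liftR jQ (⇑Q) a b ∨ liftR jR (⇑R) a b)
    (v := liftR jP (⇑P)) (O := fun w => ∃ z, w = jD z) hv
    (x := jD x) (y := jD y) ⟨x, rfl⟩ ⟨y, rfl⟩
  have main : EqvGen (liftR (jD (m := m)) (sgen P (starPart Q R))) (jD x) (jD y) ↔
      EqvGen (fun a b => (∃ z, a = jD z) ∧ (∃ z, b = jD z) ∧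
        (EqvGen (fun a b => liftR jQ (⇑Q) a b ∨ liftR jR (⇑R) a b) a b ∨ liftR jP (⇑P) a b))
        (jD x) (jD y) := by
    apply eqvGen_iff_of_le
    · rintro a b ⟨a0, b0, hg, rfl, rfl⟩
      refine EqvGen.rel _ _ ⟨⟨a0, rfl⟩, ⟨b0, rfl⟩, ?_⟩
      rcases hg with ⟨a1, b1, hP, rfl, rfl⟩ | ⟨a1, b1, hQR, rfl, rfl⟩
      · right
        refine ⟨a1, b1, hP, ?_, ?_⟩ <;> · first
          | (rcases a1 with a | i <;> rfl)
          | (rcases b1 with a | i <;> rfl)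
      · left
        have h1 : EqvGen (sgen Q R) (Sum.map id Sum.inr a1) (Sum.map id Sum.inr b1) := hQR
        have h2 := eqvGen_liftR_of (j := jB (k := k)) h1
        have h4 : ∀ a1 : Fin l ⊕ Fin p,
            jB (Sum.map id Sum.inr a1) = jD (m := m) (embTop a1 : Fin k ⊕ (Fin l ⊕ Fin p)) := by
          rintro (i | d) <;> rfl
        rw [h4 a1, h4 b1] at h2
        exact (eqvGen_congr (fun a b => (uQR_iff Q R).symm)).mp h2
    · rintro a b ⟨⟨a0, rfl⟩, ⟨b0, rfl⟩, h | h⟩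
      · have h' := (eqvGen_congr (fun a b => uQR_iff Q R)).mp h
        rcases eqvGen_liftR_dec jB_inj h' with heq | ⟨aa, bb, ha, hb, hE⟩
        · rw [jD_inj heq]; exact EqvGen.refl _
        · obtain ⟨a1, rfl, rfl⟩ := DB_cases ha
          obtain ⟨b1, rfl, rfl⟩ := DB_cases hb
          have hS : starPart Q R a1 b1 := hE
          exact EqvGen.rel _ _ ⟨embTop a1, embTop b1, Or.inr ⟨a1, b1, hS, rfl, rfl⟩, rfl, rfl⟩
      · obtain ⟨r1, r2, hP, ha, hb⟩ := h
        obtain rfl := DP_case ha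
        obtain rfl := DP_case hb
        exact EqvGen.rel _ _ ⟨embBot r1, embBot r2, Or.inl ⟨r1, r2, hP, rfl, rfl⟩, rfl, rfl⟩
  exact ((stack_rel _ _).trans
    ((eqvGen_liftR_iff jD_inj).trans
      (main.trans (key.symm.trans (eqvGen_congr hOr).symm))))

/-- Associativity, pointwise. -/
theorem part1 : starPart P (starPart Q R) = starPart (starPart P Q) R := by
  apply Setoid.ext; intro x y
  have hpt : ∀ z : Fin k ⊕ Fin p,
      jD (m := m) (Sum.map id Sum.inr z : Fin k ⊕ (Fin l ⊕ Fin p)) =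
        jC (l := l) (Sum.map id Sum.inr z : Fin k ⊕ (Fin m ⊕ Fin p)) := by
    rintro (a | d) <;> rfl
  constructor
  · intro h
    have h1 := (relD P Q R (Sum.map id Sum.inr x) (Sum.map id Sum.inr y)).mp h
    rw [hpt x, hpt y] at h1
    exact (relC P Q R (Sum.map id Sum.inr x) (Sum.map id Sum.inr y)).mpr h1
  · intro h
    have h1 := (relC P Q R (Sum.map id Sum.inr x) (Sum.map id Sum.inr y)).mp h
    rw [← hpt x, ← hpt y] at h1
    exact (relD P Q R (Sum.map id Sum.inr x) (Sum.map id Sum.inr y)).mpr h1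

/-- The class `D` contains the middle-row-1 vertex `i`. -/
def HasL (D : Quotient (TS P Q R)) : Prop := ∃ i : Fin l, Quotient.mk (TS P Q R) (vB i) = D
/-- The class `D` contains the middle-row-2 vertex `c`. -/
def HasM (D : Quotient (TS P Q R)) : Prop := ∃ c : Fin m, Quotient.mk (TS P Q R) (vC c) = D
/-- The class `D` contains no bottom and no top vertices. -/
def InnerD (D : Quotient (TS P Q R)) : Prop :=
  (∀ a : Fin k, Quotient.mk (TS P Q R) (vA a) ≠ D) ∧
    (∀ d : Fin p, Quotient.mk (TS P Q R) (vD d) ≠ D)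

theorem toBigA {x y : Fin k ⊕ (Fin l ⊕ Fin m)} (h : stackSetoid P Q x y) :
    TS P Q R (jA x) (jA y) := by
  have h1 : EqvGen (sgen P Q) x y := h
  have h2 := eqvGen_liftR_of (j := jA (p := p)) h1
  have h3 := (eqvGen_congr (fun a b => (uPQ_iff P Q).symm)).mp h2
  exact h3.mono (fun a b hab => by unfold bigGen; tauto)

theorem toBigB {x y : Fin l ⊕ (Fin m ⊕ Fin p)} (h : stackSetoid Q R x y) :
    TS P Q R (jB x) (jB y) := by
  have h1 : EqvGen (sgen Q R) x y := h
  have h2 := eqvGen_liftR_of (j := jB (k := k)) h1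
  have h3 := (eqvGen_congr (fun a b => (uQR_iff Q R).symm)).mp h2
  exact h3.mono (fun a b hab => by unfold bigGen; tauto)

theorem backA {i i' : Fin l}
    (h : EqvGen (fun a b => liftR jP (⇑P) a b ∨ liftR (jQ (p := p)) (⇑Q) a b) (vB i) (vB i')) :
    stackSetoid P Q (Sum.inr (Sum.inl i)) (Sum.inr (Sum.inl i')) := by
  have h' := (eqvGen_congr (fun a b => uPQ_iff P Q)).mp h
  have e1 : vB (k := k) (m := m) (p := p) i = jA (Sum.inr (Sum.inl i)) := rfl
  have e2 : vB (k := k) (m := m) (p := p) i' = jA (Sum.inr (Sum.inl i')) := rfl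
  rw [e1, e2] at h'
  exact (eqvGen_liftR_iff jA_inj).mpr h'

theorem backB {c c' : Fin m}
    (h : EqvGen (fun a b => liftR (jQ (k := k)) (⇑Q) a b ∨ liftR jR (⇑R) a b) (vC c) (vC c')) :
    stackSetoid Q R (Sum.inr (Sum.inl c)) (Sum.inr (Sum.inl c')) := by
  have h' := (eqvGen_congr (fun a b => uQR_iff Q R)).mp h
  have e1 : vC (k := k) (l := l) (p := p) c = jB (Sum.inr (Sum.inl c)) := rfl
  have e2 : vC (k := k) (l := l) (p := p) c' = jB (Sum.inr (Sum.inl c')) := rfl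
  rw [e1, e2] at h'
  exact (eqvGen_liftR_iff jB_inj).mpr h'

/-- Sealing of middle-only `stack(Q,P)` components inside the four-row diagram. -/
theorem sealA (i : Fin l)
    (hMid : ∀ z, stackSetoid P Q z (Sum.inr (Sum.inl i)) → ∃ i' : Fin l, z = Sum.inr (Sum.inl i'))
    {w : Wt k l m p} (h : TS P Q R (vB i) w) :
    ∃ i' : Fin l, w = vB i' ∧
      stackSetoid P Q (Sum.inr (Sum.inl i)) (Sum.inr (Sum.inl i')) := by
  have hOr : ∀ a b : Wt k l m p, bigGen P Q R a b ↔
      ((fun a b => liftR jP (⇑P) a b ∨ liftR jQ (⇑Q) a b) a b ∨ liftR jR (⇑R) a b) := by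
    intro a b; unfold bigGen; tauto
  have hv : ∀ a b : Wt k l m p, liftR jR (⇑R) a b →
      ¬ (∃ i' : Fin l, a = vB i') ∧ ¬ (∃ i' : Fin l, b = vB i') := by
    rintro a b ⟨r1, r2, hr, rfl, rfl⟩
    constructor <;> · rintro ⟨i', hi'⟩; simp [jR, vB] at hi'
  have hpureA : ∀ z : Wt k l m p,
      EqvGen (fun a b => liftR jP (⇑P) a b ∨ liftR jQ (⇑Q) a b) (vB i) z →
      ∃ i' : Fin l, z = vB i' := by
    intro z hz
    have h' := (eqvGen_congr (fun a b => uPQ_iff P Q)).mp hz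
    have e1 : vB (k := k) (m := m) (p := p) i = jA (Sum.inr (Sum.inl i)) := rfl
    rw [e1] at h'
    rcases eqvGen_liftR_dec jA_inj h' with heq | ⟨aa, bb, ha, hb, hE⟩
    · exact ⟨i, heq.symm⟩
    · obtain rfl : (Sum.inr (Sum.inl i) : Fin k ⊕ (Fin l ⊕ Fin m)) = aa := jA_inj ha
      obtain ⟨i', hi'⟩ := hMid bb (Setoid.symm' _ hE)
      subst hi'
      exact ⟨i', hb⟩
  have h' := (eqvGen_congr (hOr)).mp h
  obtain ⟨⟨hGw, _⟩, hu⟩ := pure_lemma hv h' ⟨⟨i, rfl⟩, hpureA⟩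
  obtain ⟨i', rfl⟩ := hGw
  exact ⟨i', rfl, backA P Q (by exact hu)⟩

/-- Sealing of middle-only `stack(R,Q)` components inside the four-row diagram. -/
theorem sealB (c : Fin m)
    (hMid : ∀ z, stackSetoid Q R z (Sum.inr (Sum.inl c)) → ∃ c' : Fin m, z = Sum.inr (Sum.inl c'))
    {w : Wt k l m p} (h : TS P Q R (vC c) w) :
    ∃ c' : Fin m, w = vC c' ∧
      stackSetoid Q R (Sum.inr (Sum.inl c)) (Sum.inr (Sum.inl c')) := by
  have hOr : ∀ a b : Wt k l m p, bigGen P Q R a b ↔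
      ((fun a b => liftR jQ (⇑Q) a b ∨ liftR jR (⇑R) a b) a b ∨ liftR jP (⇑P) a b) := by
    intro a b; unfold bigGen; tauto
  have hv : ∀ a b : Wt k l m p, liftR jP (⇑P) a b →
      ¬ (∃ c' : Fin m, a = vC c') ∧ ¬ (∃ c' : Fin m, b = vC c') := by
    rintro a b ⟨r1, r2, hr, rfl, rfl⟩
    constructor
    · rintro ⟨c', hc'⟩; rcases r1 with a | ii <;> simp [jP, vC] at hc'
    · rintro ⟨c', hc'⟩; rcases r2 with a | ii <;> simp [jP, vC] at hc'
  have hpureB : ∀ z : Wt k l m p,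
      EqvGen (fun a b => liftR jQ (⇑Q) a b ∨ liftR jR (⇑R) a b) (vC c) z →
      ∃ c' : Fin m, z = vC c' := by
    intro z hz
    have h' := (eqvGen_congr (fun a b => uQR_iff Q R)).mp hz
    have e1 : vC (k := k) (l := l) (p := p) c = jB (Sum.inr (Sum.inl c)) := rfl
    rw [e1] at h'
    rcases eqvGen_liftR_dec jB_inj h' with heq | ⟨aa, bb, ha, hb, hE⟩
    · exact ⟨c, heq.symm⟩
    · obtain rfl : (Sum.inr (Sum.inl c) : Fin l ⊕ (Fin m ⊕ Fin p)) = aa := jB_inj ha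
      obtain ⟨c', hc'⟩ := hMid bb (Setoid.symm' _ hE)
      subst hc'
      exact ⟨c', hb⟩
  have h' := (eqvGen_congr (hOr)).mp h
  obtain ⟨⟨hGw, _⟩, hu⟩ := pure_lemma hv h' ⟨⟨c, rfl⟩, hpureB⟩
  obtain ⟨c', rfl⟩ := hGw
  exact ⟨c', rfl, backB Q R (by exact hu)⟩

theorem alpha_C : alphaNum (starPart P Q) R =
    Nat.card {D : Quotient (TS P Q R) // InnerD P Q R D ∧ HasM P Q R D} := by
  classical
  unfold alphaNum
  set S3 := stackSetoid (starPart P Q) R with hS3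
  let φ : Quotient S3 → Quotient (TS P Q R) :=
    Quotient.lift (fun x => Quotient.mk (TS P Q R) (jC x))
      (fun a b h => Quotient.sound ((relC P Q R a b).mp h))
  have prop : ∀ c : Quotient S3,
      (∀ x, Quotient.mk S3 x = c → ∃ i : Fin m, x = Sum.inr (Sum.inl i)) →
      InnerD P Q R (φ c) ∧ HasM P Q R (φ c) := by
    intro c hc
    obtain ⟨x, rfl⟩ := Quotient.exists_rep c
    obtain ⟨i, rfl⟩ := hc x rfl
    refine ⟨⟨?_, ?_⟩, ⟨i, rfl⟩⟩
    · intro a heq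
      have hT : TS P Q R (vA a) (vC i) := Quotient.exact heq
      have hrel := (relC P Q R (Sum.inl a) (Sum.inr (Sum.inl i))).mpr hT
      obtain ⟨i', hi'⟩ := hc (Sum.inl a) (Quotient.sound hrel)
      simp at hi'
    · intro d heq
      have hT : TS P Q R (vD d) (vC i) := Quotient.exact heq
      have hrel := (relC P Q R (Sum.inr (Sum.inr d)) (Sum.inr (Sum.inl i))).mpr hT
      obtain ⟨i', hi'⟩ := hc (Sum.inr (Sum.inr d)) (Quotient.sound hrel)
      simp at hi'
  refine Nat.card_congr (Equiv.ofBijective (fun c => ⟨φ c.1, prop c.1 c.2⟩) ⟨?_, ?_⟩)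
  · rintro ⟨c, hc⟩ ⟨c', hc'⟩ heq
    obtain ⟨x, rfl⟩ := Quotient.exists_rep c
    obtain ⟨x', rfl⟩ := Quotient.exists_rep c'
    obtain ⟨i, rfl⟩ := hc x rfl
    obtain ⟨i', rfl⟩ := hc' x' rfl
    have hval : φ (Quotient.mk S3 (Sum.inr (Sum.inl i))) =
        φ (Quotient.mk S3 (Sum.inr (Sum.inl i'))) := congrArg Subtype.val heq
    have hT : TS P Q R (vC i) (vC i') := Quotient.exact hval
    exact Subtype.ext (Quotient.sound
      ((relC P Q R (Sum.inr (Sum.inl i)) (Sum.inr (Sum.inl i'))).mpr hT))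
  · rintro ⟨D, hIn, c0, hc0⟩
    refine ⟨⟨Quotient.mk S3 (Sum.inr (Sum.inl c0)), ?_⟩, ?_⟩
    · intro x hx
      have hrel : S3 x (Sum.inr (Sum.inl c0)) := Quotient.exact hx
      have hT := (relC P Q R x (Sum.inr (Sum.inl c0))).mp hrel
      rcases x with a | (c | d)
      · exact absurd ((Quotient.sound hT).trans hc0) (hIn.1 a)
      · exact ⟨c, rfl⟩
      · exact absurd ((Quotient.sound hT).trans hc0) (hIn.2 d)
    · exact Subtype.ext hc0

theorem alpha_D : alphaNum P (starPart Q R) =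
    Nat.card {D : Quotient (TS P Q R) // InnerD P Q R D ∧ HasL P Q R D} := by
  classical
  unfold alphaNum
  set S4 := stackSetoid P (starPart Q R) with hS4
  let φ : Quotient S4 → Quotient (TS P Q R) :=
    Quotient.lift (fun x => Quotient.mk (TS P Q R) (jD x))
      (fun a b h => Quotient.sound ((relD P Q R a b).mp h))
  have prop : ∀ c : Quotient S4,
      (∀ x, Quotient.mk S4 x = c → ∃ i : Fin l, x = Sum.inr (Sum.inl i)) →
      InnerD P Q R (φ c) ∧ HasL P Q R (φ c) := by
    intro c hc
    obtain ⟨x, rfl⟩ := Quotient.exists_rep c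
    obtain ⟨i, rfl⟩ := hc x rfl
    refine ⟨⟨?_, ?_⟩, ⟨i, rfl⟩⟩
    · intro a heq
      have hT : TS P Q R (vA a) (vB i) := Quotient.exact heq
      have hrel := (relD P Q R (Sum.inl a) (Sum.inr (Sum.inl i))).mpr hT
      obtain ⟨i', hi'⟩ := hc (Sum.inl a) (Quotient.sound hrel)
      simp at hi'
    · intro d heq
      have hT : TS P Q R (vD d) (vB i) := Quotient.exact heq
      have hrel := (relD P Q R (Sum.inr (Sum.inr d)) (Sum.inr (Sum.inl i))).mpr hT
      obtain ⟨i', hi'⟩ := hc (Sum.inr (Sum.inr d)) (Quotient.sound hrel)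
      simp at hi'
  refine Nat.card_congr (Equiv.ofBijective (fun c => ⟨φ c.1, prop c.1 c.2⟩) ⟨?_, ?_⟩)
  · rintro ⟨c, hc⟩ ⟨c', hc'⟩ heq
    obtain ⟨x, rfl⟩ := Quotient.exists_rep c
    obtain ⟨x', rfl⟩ := Quotient.exists_rep c'
    obtain ⟨i, rfl⟩ := hc x rfl
    obtain ⟨i', rfl⟩ := hc' x' rfl
    have hval : φ (Quotient.mk S4 (Sum.inr (Sum.inl i))) =
        φ (Quotient.mk S4 (Sum.inr (Sum.inl i'))) := congrArg Subtype.val heq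
    have hT : TS P Q R (vB i) (vB i') := Quotient.exact hval
    exact Subtype.ext (Quotient.sound
      ((relD P Q R (Sum.inr (Sum.inl i)) (Sum.inr (Sum.inl i'))).mpr hT))
  · rintro ⟨D, hIn, i0, hi0⟩
    refine ⟨⟨Quotient.mk S4 (Sum.inr (Sum.inl i0)), ?_⟩, ?_⟩
    · intro x hx
      have hrel : S4 x (Sum.inr (Sum.inl i0)) := Quotient.exact hx
      have hT := (relD P Q R x (Sum.inr (Sum.inl i0))).mp hrel
      rcases x with a | (i | d)
      · exact absurd ((Quotient.sound hT).trans hi0) (hIn.1 a)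
      · exact ⟨i, rfl⟩
      · exact absurd ((Quotient.sound hT).trans hi0) (hIn.2 d)
    · exact Subtype.ext hi0

theorem alpha_A : alphaNum P Q =
    Nat.card {D : Quotient (TS P Q R) // InnerD P Q R D ∧ ¬ HasM P Q R D} := by
  classical
  unfold alphaNum
  set S1 := stackSetoid P Q with hS1
  let φ : Quotient S1 → Quotient (TS P Q R) :=
    Quotient.lift (fun x => Quotient.mk (TS P Q R) (jA x))
      (fun a b h => Quotient.sound (toBigA P Q R h))
  have prop : ∀ c : Quotient S1,
      (∀ x, Quotient.mk S1 x = c → ∃ i : Fin l, x = Sum.inr (Sum.inl i)) →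
      InnerD P Q R (φ c) ∧ ¬ HasM P Q R (φ c) := by
    intro c hc
    obtain ⟨x, rfl⟩ := Quotient.exists_rep c
    obtain ⟨i, rfl⟩ := hc x rfl
    have hMid : ∀ z, stackSetoid P Q z (Sum.inr (Sum.inl i)) →
        ∃ i' : Fin l, z = Sum.inr (Sum.inl i') := by
      intro z hz
      exact hc z (Quotient.sound hz)
    refine ⟨⟨?_, ?_⟩, ?_⟩
    · intro a heq
      have hT : TS P Q R (vB i) (vA a) :=
        Setoid.symm' _ (Quotient.exact heq)
      obtain ⟨i', hw, _⟩ := sealA P Q R i hMid hT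
      simp [vA, vB] at hw
    · intro d heq
      have hT : TS P Q R (vB i) (vD d) :=
        Setoid.symm' _ (Quotient.exact heq)
      obtain ⟨i', hw, _⟩ := sealA P Q R i hMid hT
      simp [vD, vB] at hw
    · rintro ⟨cc, heq⟩
      have hT : TS P Q R (vB i) (vC cc) :=
        Setoid.symm' _ (Quotient.exact heq)
      obtain ⟨i', hw, _⟩ := sealA P Q R i hMid hT
      simp [vC, vB] at hw
  refine Nat.card_congr (Equiv.ofBijective (fun c => ⟨φ c.1, prop c.1 c.2⟩) ⟨?_, ?_⟩)
  · rintro ⟨c, hc⟩ ⟨c', hc'⟩ heq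
    obtain ⟨x, rfl⟩ := Quotient.exists_rep c
    obtain ⟨x', rfl⟩ := Quotient.exists_rep c'
    obtain ⟨i, rfl⟩ := hc x rfl
    obtain ⟨i', rfl⟩ := hc' x' rfl
    have hMid : ∀ z, stackSetoid P Q z (Sum.inr (Sum.inl i)) →
        ∃ i'' : Fin l, z = Sum.inr (Sum.inl i'') := by
      intro z hz
      exact hc z (Quotient.sound hz)
    have hval : φ (Quotient.mk S1 (Sum.inr (Sum.inl i))) =
        φ (Quotient.mk S1 (Sum.inr (Sum.inl i'))) := congrArg Subtype.val heq
    have hT : TS P Q R (vB i) (vB i') := Quotient.exact hval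
    obtain ⟨i'', hw, hrel⟩ := sealA P Q R i hMid hT
    have : i' = i'' := by simpa [vB] using hw
    subst this
    exact Subtype.ext (Quotient.sound hrel)
  · rintro ⟨D, hIn, hM⟩
    obtain ⟨w, rfl⟩ := Quotient.exists_rep D
    rcases w with a | (i | (cc | d))
    · exact absurd rfl (hIn.1 a)
    · refine ⟨⟨Quotient.mk S1 (Sum.inr (Sum.inl i)), ?_⟩, ?_⟩
      · intro x hx
        have hrel : S1 x (Sum.inr (Sum.inl i)) := Quotient.exact hx
        have hT := toBigA P Q R hrel
        rcases x with a | (i' | cc)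
        · exact absurd (Quotient.sound hT) (hIn.1 a)
        · exact ⟨i', rfl⟩
        · exact absurd ⟨cc, Quotient.sound hT⟩ hM
      · exact Subtype.ext rfl
    · exact absurd ⟨cc, rfl⟩ hM
    · exact absurd rfl (hIn.2 d)

theorem alpha_B : alphaNum Q R =
    Nat.card {D : Quotient (TS P Q R) // InnerD P Q R D ∧ ¬ HasL P Q R D} := by
  classical
  unfold alphaNum
  set S2 := stackSetoid Q R with hS2
  let φ : Quotient S2 → Quotient (TS P Q R) :=
    Quotient.lift (fun x => Quotient.mk (TS P Q R) (jB x))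
      (fun a b h => Quotient.sound (toBigB P Q R h))
  have prop : ∀ c : Quotient S2,
      (∀ x, Quotient.mk S2 x = c → ∃ i : Fin m, x = Sum.inr (Sum.inl i)) →
      InnerD P Q R (φ c) ∧ ¬ HasL P Q R (φ c) := by
    intro c hc
    obtain ⟨x, rfl⟩ := Quotient.exists_rep c
    obtain ⟨i, rfl⟩ := hc x rfl
    have hMid : ∀ z, stackSetoid Q R z (Sum.inr (Sum.inl i)) →
        ∃ i' : Fin m, z = Sum.inr (Sum.inl i') := by
      intro z hz
      exact hc z (Quotient.sound hz)
    refine ⟨⟨?_, ?_⟩, ?_⟩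
    · intro a heq
      have hT : TS P Q R (vC i) (vA a) :=
        Setoid.symm' _ (Quotient.exact heq)
      obtain ⟨i', hw, _⟩ := sealB P Q R i hMid hT
      simp [vA, vC] at hw
    · intro d heq
      have hT : TS P Q R (vC i) (vD d) :=
        Setoid.symm' _ (Quotient.exact heq)
      obtain ⟨i', hw, _⟩ := sealB P Q R i hMid hT
      simp [vD, vC] at hw
    · rintro ⟨ll, heq⟩
      have hT : TS P Q R (vC i) (vB ll) :=
        Setoid.symm' _ (Quotient.exact heq)
      obtain ⟨i', hw, _⟩ := sealB P Q R i hMid hT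
      simp [vC, vB] at hw
  refine Nat.card_congr (Equiv.ofBijective (fun c => ⟨φ c.1, prop c.1 c.2⟩) ⟨?_, ?_⟩)
  · rintro ⟨c, hc⟩ ⟨c', hc'⟩ heq
    obtain ⟨x, rfl⟩ := Quotient.exists_rep c
    obtain ⟨x', rfl⟩ := Quotient.exists_rep c'
    obtain ⟨i, rfl⟩ := hc x rfl
    obtain ⟨i', rfl⟩ := hc' x' rfl
    have hMid : ∀ z, stackSetoid Q R z (Sum.inr (Sum.inl i)) →
        ∃ i'' : Fin m, z = Sum.inr (Sum.inl i'') := by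
      intro z hz
      exact hc z (Quotient.sound hz)
    have hval : φ (Quotient.mk S2 (Sum.inr (Sum.inl i))) =
        φ (Quotient.mk S2 (Sum.inr (Sum.inl i'))) := congrArg Subtype.val heq
    have hT : TS P Q R (vC i) (vC i') := Quotient.exact hval
    obtain ⟨i'', hw, hrel⟩ := sealB P Q R i hMid hT
    have : i' = i'' := by simpa [vC] using hw
    subst this
    exact Subtype.ext (Quotient.sound hrel)
  · rintro ⟨D, hIn, hL⟩
    obtain ⟨w, rfl⟩ := Quotient.exists_rep D
    rcases w with a | (i | (cc | d))
    · exact absurd rfl (hIn.1 a)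
    · exact absurd ⟨i, rfl⟩ hL
    · refine ⟨⟨Quotient.mk S2 (Sum.inr (Sum.inl cc)), ?_⟩, ?_⟩
      · intro x hx
        have hrel : S2 x (Sum.inr (Sum.inl cc)) := Quotient.exact hx
        have hT := toBigB P Q R hrel
        rcases x with i' | (cc' | d')
        · exact absurd ⟨i', Quotient.sound hT⟩ hL
        · exact ⟨cc', rfl⟩
        · exact absurd (Quotient.sound hT) (hIn.2 d')
      · exact Subtype.ext rfl
    · exact absurd rfl (hIn.2 d)

theorem card_split {α : Type*} [Finite α] (pr q : α → Prop) :
    Nat.card {x // pr x ∧ q x} + Nat.card {x // pr x ∧ ¬ q x} = Nat.card {x // pr x} := by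
  classical
  rw [← Nat.card_sum]
  exact Nat.card_congr
    ((Equiv.sumCongr (Equiv.subtypeSubtypeEquivSubtypeInter pr q).symm
      (Equiv.subtypeSubtypeEquivSubtypeInter pr (fun x => ¬ q x)).symm).trans
      (Equiv.sumCompl (fun x : {x // pr x} => q x.1)))

theorem part2 :
    alphaNum (starPart P Q) R + alphaNum P Q =
      alphaNum P (starPart Q R) + alphaNum Q R := by
  have h1 := card_split (α := Quotient (TS P Q R))
    (fun D => InnerD P Q R D) (fun D => HasM P Q R D)
  have h2 := card_split (α := Quotient (TS P Q R))
    (fun D => InnerD P Q R D) (fun D => HasL P Q R D)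
  rw [alpha_C, alpha_A P Q R, alpha_D, alpha_B P Q R]
  exact h1.trans h2.symm

end BigStack

theorem star_assoc_and_alpha (k l m p : ℕ)
    (P : Setoid (Fin k ⊕ Fin l)) (Q : Setoid (Fin l ⊕ Fin m)) (R : Setoid (Fin m ⊕ Fin p)) :
    -- `(R ⋆ Q) ⋆ P = R ⋆ (Q ⋆ P)`
    starPart P (starPart Q R) = starPart (starPart P Q) R
    -- `α(R, Q ⋆ P) + α(Q, P) = α(R ⋆ Q, P) + α(R, Q)`
    ∧ alphaNum (starPart P Q) R + alphaNum P Q = alphaNum P (starPart Q R) + alphaNum Q R :=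
  ⟨part1 P Q R, part2 P Q R⟩

end GPC
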